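/- For every integer n ≥ 2, C(n, n−2) = n·2^{n−2}. -/

import Mathlib

open scoped Classical

/-- Vertices `j` and `k` of `{1,…,n}` (encoded as `Fin n`, vertex `v` is `v+1`) are joined by
an edge determined by the composition `a`. -/
def CompEdge {n : ℕ} (a : Composition n) (j k : Fin n) : Prop :=
  j ≠ k ∧ ∃ i : Fin a.length,
    a.sizeUpTo i < (j : ℕ) + 1 ∧ (j : ℕ) + 1 ≤ a.sizeUpTo (i + 1) ∧
    a.sizeUpTo i < (k : ℕ) + 1 ∧ (k : ℕ) + 1 ≤ a.sizeUpTo (i + 1) ∧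
    ((j : ℕ) + 1) + ((k : ℕ) + 1) = 2 * a.sizeUpTo i + a.blocksFun i + 1

lemma CompEdge.symm {n : ℕ} {a : Composition n} {j k : Fin n} (h : CompEdge a j k) :
    CompEdge a k j := by
  obtain ⟨hne, i, h1, h2, h3, h4, h5⟩ := h
  exact ⟨hne.symm, i, h3, h4, h1, h2, by omega⟩

/-- The meander `M(a|b)` of the pair of compositions `(a, b)` of `n`. -/
def Meander {n : ℕ} (a b : Composition n) : SimpleGraph (Fin n) where
  Adj j k := CompEdge a j k ∨ CompEdge b j k
  symm := by
    constructor
    intro j k h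
    rcases h with h | h
    · exact Or.inl h.symm
    · exact Or.inr h.symm
  loopless := by
    constructor
    intro j h
    rcases h with ⟨hne, _⟩ | ⟨hne, _⟩ <;> exact hne rfl

/-- A connected component of the meander is a cycle if each of its vertices is incident
to both a top edge and a bottom edge. -/
def IsCycleComp {n : ℕ} (a b : Composition n) (c : (Meander a b).ConnectedComponent) : Prop :=
  ∀ v : Fin n, (Meander a b).connectedComponentMk v = c →
    (∃ w, CompEdge a v w) ∧ (∃ w, CompEdge b v w)

/-- The number of cycle components of the meander `M(a|b)`. -/
noncomputable def cycleCount {n : ℕ} (a b : Composition n) : ℕ :=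
  Nat.card {c : (Meander a b).ConnectedComponent // IsCycleComp a b c}

/-- The number of path components of the meander `M(a|b)`. -/
noncomputable def pathCount {n : ℕ} (a b : Composition n) : ℕ :=
  Nat.card {c : (Meander a b).ConnectedComponent // ¬ IsCycleComp a b c}

/-- The index `ind(a,b) = 2C + P - 1` of a pair of compositions of `n`. -/
noncomputable def seaweedInd {n : ℕ} (a b : Composition n) : ℕ :=
  2 * cycleCount a b + pathCount a b - 1

/-- `C(n,k)`: the number of ordered pairs of compositions of `n` of index `k`. -/
noncomputable def Cnk (n k : ℕ) : ℕ :=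
  Nat.card {p : Composition n × Composition n // seaweedInd p.1 p.2 = k}

section CutBasics

variable {n : ℕ}

/-- `p` is a cut (boundary) of the composition `a`. -/
def Cut (a : Composition n) (p : ℕ) : Prop := ∃ i : ℕ, a.sizeUpTo i = p

lemma cut_zero (a : Composition n) : Cut a 0 := ⟨0, a.sizeUpTo_zero⟩

lemma cut_n (a : Composition n) : Cut a n := ⟨a.length, a.sizeUpTo_length⟩

lemma Cut.le_n {a : Composition n} {p : ℕ} (h : Cut a p) : p ≤ n := by
  obtain ⟨i, rfl⟩ := h; exact a.sizeUpTo_le i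

lemma sizeUpTo_le_sizeUpTo (a : Composition n) {i j : ℕ} (hij : i ≤ j) :
    a.sizeUpTo i ≤ a.sizeUpTo j := a.monotone_sizeUpTo hij

/-- Adjacent cuts of a composition. -/
def AdjCut (a : Composition n) (s t : ℕ) : Prop :=
  Cut a s ∧ Cut a t ∧ s < t ∧ ∀ p, s < p → p < t → ¬ Cut a p

lemma adjCut_block (a : Composition n) (i : Fin a.length) :
    AdjCut a (a.sizeUpTo i) (a.sizeUpTo (i + 1)) := by
  refine ⟨⟨i, rfl⟩, ⟨i + 1, rfl⟩, a.sizeUpTo_strict_mono i.2, ?_⟩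
  rintro p h1 h2 ⟨j, rfl⟩
  rcases le_or_gt j (i : ℕ) with hj | hj
  · exact absurd (sizeUpTo_le_sizeUpTo a hj) (by omega)
  · exact absurd (sizeUpTo_le_sizeUpTo a (show (i : ℕ) + 1 ≤ j from hj)) (by omega)

lemma adjCut_exists_block {a : Composition n} {s t : ℕ} (h : AdjCut a s t) :
    ∃ i : Fin a.length, a.sizeUpTo i = s ∧ a.sizeUpTo (i + 1) = t := by
  obtain ⟨⟨j1, rfl⟩, ⟨j2, rfl⟩, hlt, hbet⟩ := h
  have hj1 : j1 < a.length := by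
    by_contra hc
    have := a.sizeUpTo_ofLength_le j1 (by omega)
    have := (a.sizeUpTo_le j2)
    omega
  refine ⟨⟨j1, hj1⟩, rfl, ?_⟩
  show a.sizeUpTo (j1 + 1) = a.sizeUpTo j2
  have h1 : a.sizeUpTo j1 < a.sizeUpTo (j1 + 1) := a.sizeUpTo_strict_mono hj1
  have h2 : j1 < j2 := by
    by_contra hc
    exact absurd (sizeUpTo_le_sizeUpTo a (show j2 ≤ j1 by omega)) (by omega)
  have h3 : a.sizeUpTo (j1 + 1) ≤ a.sizeUpTo j2 := sizeUpTo_le_sizeUpTo a (by omega)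
  by_contra hne
  exact hbet _ h1 (by omega) ⟨j1 + 1, rfl⟩

/-- Characterization of `CompEdge` in terms of cuts. -/
lemma edge_iff_cut {a : Composition n} {x y : Fin n} :
    CompEdge a x y ↔ x ≠ y ∧ ∃ s t : ℕ, AdjCut a s t ∧
      s ≤ (x : ℕ) ∧ s ≤ (y : ℕ) ∧ (x : ℕ) < t ∧ (y : ℕ) < t ∧
      s + t = (x : ℕ) + (y : ℕ) + 1 := by
  constructor
  · rintro ⟨hne, i, h1, h2, h3, h4, h5⟩
    refine ⟨hne, a.sizeUpTo i, a.sizeUpTo (i + 1), adjCut_block a i, by omega, by omega,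
      by omega, by omega, ?_⟩
    have := a.sizeUpTo_succ' i
    omega
  · rintro ⟨hne, s, t, hadj, hx1, hy1, hx2, hy2, hsum⟩
    obtain ⟨i, his, hit⟩ := adjCut_exists_block hadj
    refine ⟨hne, i, by omega, by omega, by omega, by omega, ?_⟩
    have := a.sizeUpTo_succ' i
    omega

lemma adjCut_unique {a : Composition n} {s t s' t' p : ℕ} (h : AdjCut a s t)
    (h' : AdjCut a s' t') (hs : s ≤ p) (ht : p < t) (hs' : s' ≤ p) (ht' : p < t') :
    s = s' ∧ t = t' := by
  obtain ⟨hcs, hct, hlt, hbet⟩ := h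
  obtain ⟨hcs', hct', hlt', hbet'⟩ := h'
  have h1 : s = s' := by
    rcases lt_trichotomy s s' with hc | hc | hc
    · exact absurd hcs' (hbet _ hc (by omega))
    · exact hc
    · exact absurd hcs (hbet' _ hc (by omega))
  subst h1
  rcases lt_trichotomy t t' with hc | hc | hc
  · exact absurd hct (hbet' _ (by omega) hc)
  · exact ⟨rfl, hc⟩
  · exact absurd hct' (hbet _ (by omega) hc)

/-- The edges of a composition form a matching. -/
lemma compEdge_matching {a : Composition n} {x y y' : Fin n}
    (h : CompEdge a x y) (h' : CompEdge a x y') : y = y' := by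
  rw [edge_iff_cut] at h h'
  obtain ⟨hne, s, t, hadj, hx1, hy1, hx2, hy2, hsum⟩ := h
  obtain ⟨hne', s', t', hadj', hx1', hy1', hx2', hy2', hsum'⟩ := h'
  obtain ⟨rfl, rfl⟩ := adjCut_unique hadj hadj' hx1 hx2 hx1' hx2'
  exact Fin.ext (by omega)

lemma CompEdge.ne {a : Composition n} {x y : Fin n} (h : CompEdge a x y) : x ≠ y := h.1

/-- The outermost edge of a block of size at least 2. -/
lemma outer_edge (a : Composition n) (i : Fin a.length) (h : 2 ≤ a.blocksFun i) :
    CompEdge a ⟨a.sizeUpTo i, by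
        have := a.sizeUpTo_succ' i; have := a.sizeUpTo_le ((i : ℕ) + 1); omega⟩
      ⟨a.sizeUpTo i + a.blocksFun i - 1, by
        have := a.sizeUpTo_succ' i; have := a.sizeUpTo_le ((i : ℕ) + 1); omega⟩ := by
  have hs := a.sizeUpTo_succ' i
  refine ⟨by simp only [ne_eq, Fin.mk.injEq]; omega, i, ?_, ?_, ?_, ?_, ?_⟩ <;>
    simp only [] <;> omega

/-- Cuts are characterized by edges: an interior point is a cut iff no edge crosses it. -/
lemma cut_iff_no_crossing {a : Composition n} {p : ℕ} (h0 : 0 < p) (hn : p < n) :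
    Cut a p ↔ ¬ ∃ x y : Fin n, CompEdge a x y ∧ (x : ℕ) < p ∧ p ≤ (y : ℕ) := by
  constructor
  · rintro hp ⟨x, y, he, hx, hy⟩
    rw [edge_iff_cut] at he
    obtain ⟨hne, s, t, ⟨hcs, hct, hlt, hbet⟩, hx1, hy1, hx2, hy2, hsum⟩ := he
    exact hbet p (by omega) (by omega) hp
  · intro hcr
    by_contra hp
    set x : Fin n := ⟨p - 1, by omega⟩ with hxdef
    set i := a.index x with hidef
    have h1 : a.sizeUpTo i ≤ p - 1 := a.sizeUpTo_index_le x
    have h2 : p - 1 < a.sizeUpTo ((i : ℕ) + 1) := a.lt_sizeUpTo_index_succ x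
    have hs := a.sizeUpTo_succ' i
    have h3 : p < a.sizeUpTo i + a.blocksFun i := by
      rcases Nat.lt_or_ge p (a.sizeUpTo i + a.blocksFun i) with hc | hc
      · exact hc
      · exact absurd (show a.sizeUpTo ((i:ℕ)+1) = p by omega) (fun hh => hp ⟨_, hh⟩)
    have h4 : a.sizeUpTo i < p := by
      rcases Nat.lt_or_ge (a.sizeUpTo i) p with hc | hc
      · exact hc
      · exact absurd (show a.sizeUpTo (i:ℕ) = p by omega) (fun hh => hp ⟨_, hh⟩)
    have hm : 2 ≤ a.blocksFun i := by omega
    exact hcr ⟨_, _, outer_edge a i hm, by simp; omega, by simp; omega⟩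

end CutBasics
section Injectivity

variable {n : ℕ}

lemma psums_cons (h : ℕ) (t : List ℕ) (p : ℕ) (hh : 0 < h) :
    (∃ j, ((h :: t).take j).sum = h + p) ↔ ∃ j, (t.take j).sum = p := by
  constructor
  · rintro ⟨j, hj⟩
    cases j with
    | zero => simp at hj; omega
    | succ j =>
      refine ⟨j, ?_⟩
      simp [List.take_succ_cons] at hj
      omega
  · rintro ⟨j, hj⟩
    exact ⟨j + 1, by simp [List.take_succ_cons]; omega⟩

lemma list_eq_of_psums (L L' : List ℕ) (hL : ∀ x ∈ L, 0 < x) (hL' : ∀ x ∈ L', 0 < x)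
    (h : ∀ p, (∃ j, (L.take j).sum = p) ↔ (∃ j, (L'.take j).sum = p)) : L = L' := by
  induction L generalizing L' with
  | nil =>
    cases L' with
    | nil => rfl
    | cons h' t' =>
      exfalso
      obtain ⟨j, hj⟩ := (h h').2 ⟨1, by simp⟩
      have := hL' h' (by simp)
      simp at hj
      omega
  | cons hd tl ih =>
    have hhd : 0 < hd := hL hd (by simp)
    cases L' with
    | nil =>
      exfalso
      obtain ⟨j, hj⟩ := (h hd).1 ⟨1, by simp⟩
      simp at hj
      omega
    | cons hd' tl' =>
      have hhd' : 0 < hd' := hL' hd' (by simp)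
      have he : hd = hd' := by
        obtain ⟨j, hj⟩ := (h hd).1 ⟨1, by simp⟩
        obtain ⟨j', hj'⟩ := (h hd').2 ⟨1, by simp⟩
        -- hd is a prefix sum of hd' :: tl', so hd = 0 or hd ≥ hd'
        have h1 : hd' ≤ hd := by
          cases j with
          | zero => simp at hj; omega
          | succ j => simp [List.take_succ_cons] at hj; omega
        have h2 : hd ≤ hd' := by
          cases j' with
          | zero => simp at hj'; omega
          | succ j' => simp [List.take_succ_cons] at hj'; omega
        omega
      subst he
      have htl : tl = tl' := by
        refine ih tl' (fun x hx => hL x (List.mem_cons_of_mem _ hx)) (fun x hx => hL' x (List.mem_cons_of_mem _ hx)) ?_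
        intro p
        rw [← psums_cons hd tl p hhd, ← psums_cons hd tl' p hhd', h]
      rw [htl]

lemma cut_iff_psum {a : Composition n} {p : ℕ} :
    Cut a p ↔ ∃ j, (a.blocks.take j).sum = p := Iff.rfl

lemma composition_eq_of_cuts {a a' : Composition n} (h : ∀ p, Cut a p ↔ Cut a' p) : a = a' := by
  apply Composition.ext
  exact list_eq_of_psums _ _ (fun x hx => a.blocks_pos hx) (fun x hx => a'.blocks_pos hx)
    (fun p => h p)

/-- A composition is determined by its edge set. -/
lemma composition_eq_of_edges {a a' : Composition n}
    (h : ∀ x y, CompEdge a x y ↔ CompEdge a' x y) : a = a' := by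
  apply composition_eq_of_cuts
  intro p
  rcases Nat.eq_zero_or_pos p with rfl | hp
  · simp [cut_zero]
  rcases Nat.lt_or_ge p n with hpn | hpn
  · rw [cut_iff_no_crossing hp hpn, cut_iff_no_crossing hp hpn]
    simp only [h]
  · constructor
    · intro hc
      have := hc.le_n
      have : p = n := by omega
      subst this
      exact cut_n a'
    · intro hc
      have := hc.le_n
      have : p = n := by omega
      subst this
      exact cut_n a

end Injectivity
section Split

variable {n : ℕ}

/-- The middle part replacing a block of size `m ≥ 2` when splitting off its outer edge. -/
def splitMid (m : ℕ) : List ℕ := if m = 2 then [1, 1] else [1, m - 2, 1]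

lemma splitMid_sum {m : ℕ} (h : 2 ≤ m) : (splitMid m).sum = m := by
  unfold splitMid; split <;> simp <;> omega

lemma splitMid_pos {m x : ℕ} (h : 2 ≤ m) (hx : x ∈ splitMid m) : 0 < x := by
  unfold splitMid at hx
  split at hx <;> simp at hx <;> omega

lemma blocks_decomp (b : Composition n) (i : Fin b.length) :
    b.blocks = b.blocks.take i ++ [b.blocksFun i] ++ b.blocks.drop (i + 1) := by
  have hi : (i : ℕ) < b.blocks.length := by rw [b.blocks_length]; exact i.2
  have : b.blocksFun i = b.blocks[(i : ℕ)]'hi := rfl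
  rw [this]
  rw [List.append_assoc, List.singleton_append, ← List.drop_eq_getElem_cons hi,
    List.take_append_drop]

/-- The composition obtained from `b` by replacing block `i` (of size `m ≥ 2`) with
blocks `1, m-2, 1` (dropping the middle block if `m = 2`), i.e. removing the outermost
edge of block `i`. -/
def splitC (b : Composition n) (i : Fin b.length) (h : 2 ≤ b.blocksFun i) : Composition n where
  blocks := b.blocks.take i ++ splitMid (b.blocksFun i) ++ b.blocks.drop (i + 1)
  blocks_pos := by
    intro x hx
    simp only [List.mem_append] at hx
    rcases hx with (hx | hx) | hx
    · exact b.blocks_pos (List.mem_of_mem_take hx)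
    · exact splitMid_pos h hx
    · exact b.blocks_pos (List.mem_of_mem_drop hx)
  blocks_sum := by
    have := b.blocks_sum
    conv_rhs => rw [← this, blocks_decomp b i]
    simp [splitMid_sum h]

lemma psums3 (T M D : List ℕ) (p : ℕ) :
    (∃ j, (((T ++ M ++ D)).take j).sum = p) ↔
      (∃ j ≤ T.length, (T.take j).sum = p) ∨
      (∃ j ≤ M.length, T.sum + (M.take j).sum = p) ∨
      (∃ j, T.sum + M.sum + (D.take j).sum = p) := by
  have key : ∀ j, (((T ++ M ++ D)).take j).sum
      = (T.take j).sum + (M.take (j - T.length)).sum + (D.take (j - T.length - M.length)).sum := by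
    intro j
    rw [List.take_append, List.take_append]
    have h1 : (T ++ M).length = T.length + M.length := by simp
    rw [h1]
    simp [Nat.sub_sub, Nat.add_assoc]
  constructor
  · rintro ⟨j, rfl⟩
    rw [key]
    rcases Nat.le_total j T.length with hj | hj
    · left
      refine ⟨j, hj, ?_⟩
      have h1 : j - T.length = 0 := by omega
      simp [h1]
    rcases Nat.le_total j (T.length + M.length) with hj2 | hj2
    · right; left
      refine ⟨j - T.length, by omega, ?_⟩
      have h2 : j - T.length - M.length = 0 := by omega
      simp [h2, List.take_of_length_le hj]
    · right; right
      refine ⟨j - T.length - M.length, ?_⟩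
      simp [List.take_of_length_le hj,
        List.take_of_length_le (show M.length ≤ j - T.length by omega)]
  · rintro (⟨j, hj, rfl⟩ | ⟨j, hj, rfl⟩ | ⟨j, rfl⟩)
    · refine ⟨j, ?_⟩
      rw [key]
      have h1 : j - T.length = 0 := by omega
      simp [h1]
    · refine ⟨T.length + j, ?_⟩
      rw [key]
      have h1 : T.length + j - T.length = j := by omega
      have h2 : T.length + j - T.length - M.length = 0 := by omega
      have h3 : j - M.length = 0 := by omega
      simp [h1, h2, h3, List.take_of_length_le (show T.length ≤ T.length + j by omega)]
    · refine ⟨T.length + M.length + j, ?_⟩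
      have e1 : List.take (T.length + M.length + j) T = T := List.take_of_length_le (by omega)
      have e2 : T.length + M.length + j - T.length = M.length + j := by omega
      have e3 : List.take (M.length + j) M = M := List.take_of_length_le (by omega)
      have e4 : M.length + j - M.length = j := by omega
      rw [key, e1, e2, e3, e4]

lemma psums_of_singleton (m p : ℕ) :
    (∃ j ≤ ([m] : List ℕ).length, (([m] : List ℕ).take j).sum = p) ↔ p = 0 ∨ p = m := by
  constructor
  · rintro ⟨j, hj, rfl⟩
    simp at hj
    interval_cases j <;> simp
  · rintro (rfl | rfl)
    exacts [⟨0, by simp⟩, ⟨1, by simp⟩]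

lemma psums_of_splitMid {m : ℕ} (h : 2 ≤ m) (p : ℕ) :
    (∃ j ≤ (splitMid m).length, ((splitMid m).take j).sum = p) ↔
      p = 0 ∨ p = 1 ∨ p = m - 1 ∨ p = m := by
  rcases eq_or_ne m 2 with hm | hm
  · subst hm
    simp only [splitMid, if_pos rfl]
    constructor
    · rintro ⟨j, hj, rfl⟩
      simp at hj
      interval_cases j <;> simp
    · rintro (rfl | rfl | rfl | rfl)
      exacts [⟨0, by simp⟩, ⟨1, by simp⟩, ⟨1, by simp⟩, ⟨2, by simp⟩]
  · simp only [splitMid, if_neg hm]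
    constructor
    · rintro ⟨j, hj, rfl⟩
      simp at hj
      interval_cases j <;> simp <;> omega
    · rintro (rfl | rfl | rfl | rfl)
      · exact ⟨0, by simp⟩
      · exact ⟨1, by simp⟩
      · exact ⟨2, by simp; omega⟩
      · exact ⟨3, by simp; omega⟩

lemma take_sum_eq_sizeUpTo (b : Composition n) (i : Fin b.length) :
    (b.blocks.take i).sum = b.sizeUpTo i := rfl

lemma cut_decomp (a : Composition n) (T M D : List ℕ) (hblocks : a.blocks = T ++ M ++ D)
    (V : ℕ → Prop) (hV : ∀ p, (∃ j ≤ M.length, (M.take j).sum = p) ↔ V p) (q : ℕ) :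
    Cut a q ↔ (∃ j ≤ T.length, (T.take j).sum = q) ∨ (∃ p, V p ∧ q = T.sum + p) ∨
      (∃ j, T.sum + M.sum + (D.take j).sum = q) := by
  rw [cut_iff_psum]
  conv_lhs => rw [hblocks]
  rw [psums3]
  constructor
  · rintro (h1 | ⟨j, hj, hsum⟩ | h3)
    · exact Or.inl h1
    · exact Or.inr (Or.inl ⟨(M.take j).sum, (hV _).1 ⟨j, hj, rfl⟩, hsum.symm⟩)
    · exact Or.inr (Or.inr h3)
  · rintro (h1 | ⟨p, hVp, rfl⟩ | h3)
    · exact Or.inl h1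
    · obtain ⟨j, hj, hs⟩ := (hV p).2 hVp
      exact Or.inr (Or.inl ⟨j, hj, by rw [hs]⟩)
    · exact Or.inr (Or.inr h3)

lemma cut_splitC {b : Composition n} {i : Fin b.length} {h : 2 ≤ b.blocksFun i} {p : ℕ} :
    Cut (splitC b i h) p ↔
      Cut b p ∨ p = b.sizeUpTo i + 1 ∨ p = b.sizeUpTo i + b.blocksFun i - 1 := by
  have hT := take_sum_eq_sizeUpTo b i
  have hm : 2 ≤ b.blocksFun i := h
  rw [cut_decomp (splitC b i h) (b.blocks.take i) (splitMid (b.blocksFun i))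
      (b.blocks.drop (i + 1)) rfl _ (psums_of_splitMid h) p,
    cut_decomp b (b.blocks.take i) [b.blocksFun i] (b.blocks.drop (i + 1)) (blocks_decomp b i)
      _ (psums_of_singleton (b.blocksFun i)) p]
  have hMsum : (splitMid (b.blocksFun i)).sum = b.blocksFun i := splitMid_sum h
  rw [hMsum]
  have hMsum2 : ([b.blocksFun i] : List ℕ).sum = b.blocksFun i := by simp
  rw [hMsum2]
  constructor
  · rintro (h1 | ⟨q, (rfl | rfl | rfl | rfl), rfl⟩ | h3)
    · exact Or.inl (Or.inl h1)
    · exact Or.inl (Or.inr (Or.inl ⟨0, Or.inl rfl, by omega⟩))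
    · exact Or.inr (Or.inl (by omega))
    · exact Or.inr (Or.inr (by omega))
    · exact Or.inl (Or.inr (Or.inl ⟨b.blocksFun i, Or.inr rfl, by omega⟩))
    · exact Or.inl (Or.inr (Or.inr h3))
  · rintro ((h1 | ⟨q, (rfl | rfl), rfl⟩ | h3) | hp | hp)
    · exact Or.inl h1
    · exact Or.inr (Or.inl ⟨0, Or.inl rfl, by omega⟩)
    · exact Or.inr (Or.inl ⟨b.blocksFun i, Or.inr (Or.inr (Or.inr rfl)), by omega⟩)
    · exact Or.inr (Or.inr h3)
    · exact Or.inr (Or.inl ⟨1, Or.inr (Or.inl rfl), by omega⟩)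
    · exact Or.inr (Or.inl ⟨b.blocksFun i - 1, Or.inr (Or.inr (Or.inl rfl)), by omega⟩)

end Split
section SplitEdge

variable {n : ℕ} {b : Composition n} {i : Fin b.length} {h : 2 ≤ b.blocksFun i}

lemma adjCut_block' (b : Composition n) (i : Fin b.length) :
    AdjCut b (b.sizeUpTo i) (b.sizeUpTo i + b.blocksFun i) := by
  have h := adjCut_block b i
  rwa [b.sizeUpTo_succ' i] at h

lemma adjCut_splitC_of_disjoint {s' t' : ℕ} (hadj : AdjCut b s' t')
    (hd : t' ≤ b.sizeUpTo i ∨ b.sizeUpTo i + b.blocksFun i ≤ s') :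
    AdjCut (splitC b i h) s' t' := by
  obtain ⟨hcs, hct, hlt, hbet⟩ := hadj
  refine ⟨cut_splitC.mpr (Or.inl hcs), cut_splitC.mpr (Or.inl hct), hlt, ?_⟩
  intro p h1 h2 hc
  rcases cut_splitC.mp hc with hc | hc | hc
  · exact hbet p h1 h2 hc
  · omega
  · omega

lemma adjCut_splitC_mid (hm3 : 3 ≤ b.blocksFun i) :
    AdjCut (splitC b i h) (b.sizeUpTo i + 1) (b.sizeUpTo i + b.blocksFun i - 1) := by
  have hadjb := adjCut_block' b i
  refine ⟨cut_splitC.mpr (Or.inr (Or.inl rfl)), cut_splitC.mpr (Or.inr (Or.inr rfl)),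
    by omega, ?_⟩
  intro p h1 h2 hc
  rcases cut_splitC.mp hc with hc | hc | hc
  · exact hadjb.2.2.2 p (by omega) (by omega) hc
  · omega
  · omega

lemma splitC_edge (x y : Fin n) :
    CompEdge (splitC b i h) x y ↔
      CompEdge b x y ∧ ¬((x : ℕ) = b.sizeUpTo i ∧ (y : ℕ) = b.sizeUpTo i + b.blocksFun i - 1)
        ∧ ¬((y : ℕ) = b.sizeUpTo i ∧ (x : ℕ) = b.sizeUpTo i + b.blocksFun i - 1) := by
  set s := b.sizeUpTo i with hs
  set m := b.blocksFun i with hm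
  have hm2 : 2 ≤ m := h
  have hadjb : AdjCut b s (s + m) := adjCut_block' b i
  rw [edge_iff_cut, edge_iff_cut]
  constructor
  · rintro ⟨hne, s', t', hadj', hx1, hy1, hx2, hy2, hsum⟩
    have hvne : (x : ℕ) ≠ (y : ℕ) := fun hh => hne (Fin.ext hh)
    obtain ⟨hcs', hct', hlt', hbet'⟩ := hadj'
    by_cases hdis : t' ≤ s ∨ s + m ≤ s'
    · -- the pair is disjoint from block i; it comes from b
      have hbs' : Cut b s' := by
        rcases cut_splitC.mp hcs' with hc | hc | hc
        · exact hc
        · omega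
        · omega
      have hbt' : Cut b t' := by
        rcases cut_splitC.mp hct' with hc | hc | hc
        · exact hc
        · omega
        · omega
      have hadjb' : AdjCut b s' t' :=
        ⟨hbs', hbt', hlt', fun p h1 h2 hc => hbet' p h1 h2 (cut_splitC.mpr (Or.inl hc))⟩
      exact ⟨⟨hne, s', t', hadjb', hx1, hy1, hx2, hy2, hsum⟩, by omega, by omega⟩
    · -- overlap: s ≤ s' < t' ≤ s + m
      push_neg at hdis
      have hss' : s ≤ s' := by
        by_contra hc
        exact hbet' s (by omega) (by omega) (cut_splitC.mpr (Or.inl hadjb.1))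
      have htt' : t' ≤ s + m := by
        by_contra hc
        exact hbet' (s + m) (by omega) (by omega) (cut_splitC.mpr (Or.inl hadjb.2.1))
      have hs' : s' = s ∨ s' = s + 1 ∨ s' = s + m - 1 := by
        rcases cut_splitC.mp hcs' with hc | hc | hc
        · rcases Nat.lt_or_ge s s' with hlt2 | hle2
          · exact absurd hc (hadjb.2.2.2 s' hlt2 (by omega))
          · left; omega
        · right; left; exact hc
        · right; right; exact hc
      have ht' : t' = s + 1 ∨ t' = s + m - 1 ∨ t' = s + m := by
        rcases cut_splitC.mp hct' with hc | hc | hc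
        · rcases Nat.lt_or_ge t' (s + m) with hlt2 | hle2
          · exact absurd hc (hadjb.2.2.2 t' (by omega) hlt2)
          · right; right; omega
        · left; exact hc
        · right; left; exact hc
      -- the only pair that can host an edge is (s+1, s+m-1)
      have hmain : s' = s + 1 ∧ t' = s + m - 1 := by
        have hc1 : ¬ Cut (splitC b i h) (s + 1) ∨ ¬ (s' < s + 1 ∧ s + 1 < t') := by
          by_cases hcc : s' < s + 1 ∧ s + 1 < t'
          · exact Or.inl (fun hcut => hbet' _ hcc.1 hcc.2 hcut)
          · exact Or.inr hcc
        have hc2 : ¬ Cut (splitC b i h) (s + m - 1) ∨ ¬ (s' < s + m - 1 ∧ s + m - 1 < t') := by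
          by_cases hcc : s' < s + m - 1 ∧ s + m - 1 < t'
          · exact Or.inl (fun hcut => hbet' _ hcc.1 hcc.2 hcut)
          · exact Or.inr hcc
        have hcut1 : Cut (splitC b i h) (s + 1) := cut_splitC.mpr (Or.inr (Or.inl rfl))
        have hcut2 : Cut (splitC b i h) (s + m - 1) := cut_splitC.mpr (Or.inr (Or.inr rfl))
        rcases hc1 with hc1 | hc1
        · exact absurd hcut1 hc1
        rcases hc2 with hc2 | hc2
        · exact absurd hcut2 hc2
        -- now both s+1 and s+m-1 are not strictly inside (s', t')
        -- x ≠ y gives s' + 2 ≤ t'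
        rcases hs' with rfl | rfl | rfl <;> rcases ht' with rfl | rfl | rfl <;> omega
      obtain ⟨rfl, rfl⟩ := hmain
      refine ⟨⟨hne, s, s + m, hadjb, by omega, by omega, by omega, by omega, by omega⟩,
        by omega, by omega⟩
  · rintro ⟨⟨hne, s₀, t₀, hadj₀, hx1, hy1, hx2, hy2, hsum⟩, hno1, hno2⟩
    have hvne : (x : ℕ) ≠ (y : ℕ) := fun hh => hne (Fin.ext hh)
    by_cases h0 : s₀ = s ∧ t₀ = s + m
    · obtain ⟨rfl, rfl⟩ := h0
      have hxs : (x : ℕ) ≠ s := fun hc => hno1 ⟨hc, by omega⟩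
      have hys : (y : ℕ) ≠ s := fun hc => hno2 ⟨hc, by omega⟩
      have hm3 : 3 ≤ m := by omega
      exact ⟨hne, s + 1, s + m - 1, adjCut_splitC_mid hm3, by omega, by omega, by omega,
        by omega, by omega⟩
    · have hdis : t₀ ≤ s ∨ s + m ≤ s₀ := by
        by_contra hc
        push_neg at hc
        obtain ⟨hc1, hc2⟩ := hc
        have hss : s₀ = s := by
          rcases lt_trichotomy s₀ s with hlt2 | he | hlt2
          · exact absurd hadjb.1 (hadj₀.2.2.2 s hlt2 hc1)
          · exact he
          · exact absurd hadj₀.1 (hadjb.2.2.2 s₀ hlt2 hc2)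
        have htt : t₀ = s + m := by
          rcases lt_trichotomy t₀ (s + m) with hlt2 | he | hlt2
          · exact absurd hadj₀.2.1 (hadjb.2.2.2 t₀ (by omega) hlt2)
          · exact he
          · exact absurd hadjb.2.1 (hadj₀.2.2.2 (s + m) (by omega) hlt2)
        exact h0 ⟨hss, htt⟩
      exact ⟨hne, s₀, t₀, adjCut_splitC_of_disjoint hadj₀ hdis, hx1, hy1, hx2, hy2, hsum⟩

end SplitEdge
section Pattern

variable {n : ℕ}

/-- `A` has an extra edge `(u,v)` over `B`, all other edges agree. -/
def PatternAt (A B : Fin n → Fin n → Prop) (u v : Fin n) : Prop :=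
  A u v ∧ ∀ x y, B x y ↔ A x y ∧ ¬(x = u ∧ y = v) ∧ ¬(x = v ∧ y = u)

lemma sizeUpTo_add_blocksFun_le (b : Composition n) (i : Fin b.length) :
    b.sizeUpTo i + b.blocksFun i ≤ n := by
  have h1 := b.sizeUpTo_succ' i
  have h2 := b.sizeUpTo_le ((i : ℕ) + 1)
  omega

/-- vertex at the left end of block `i`. -/
def blockLeft (b : Composition n) (i : Fin b.length) : Fin n :=
  ⟨b.sizeUpTo i, by
    have := sizeUpTo_add_blocksFun_le b i
    have h1 := b.one_le_blocksFun i
    omega⟩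

/-- vertex at the right end of block `i`. -/
def blockRight (b : Composition n) (i : Fin b.length) : Fin n :=
  ⟨b.sizeUpTo i + b.blocksFun i - 1, by
    have := sizeUpTo_add_blocksFun_le b i
    have h1 := b.one_le_blocksFun i
    omega⟩

lemma pattern_splitC (b : Composition n) (i : Fin b.length) (h : 2 ≤ b.blocksFun i) :
    PatternAt (CompEdge b) (CompEdge (splitC b i h)) (blockLeft b i) (blockRight b i) := by
  constructor
  · have := outer_edge b i h
    convert this using 2 <;> rfl
  · intro x y
    rw [splitC_edge x y]
    simp only [blockLeft, blockRight, Fin.ext_iff]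
    tauto

lemma pattern_is_splitC {a b : Composition n} {u v : Fin n}
    (hp : PatternAt (CompEdge b) (CompEdge a) u v) :
    ∃ (i : Fin b.length) (h2 : 2 ≤ b.blocksFun i), a = splitC b i h2 := by
  obtain ⟨hbe, hiff⟩ := hp
  have hne : u ≠ v := hbe.ne
  have hvne : (u : ℕ) ≠ (v : ℕ) := fun hh => hne (Fin.ext hh)
  rw [edge_iff_cut] at hbe
  obtain ⟨-, s₀, t₀, hadj₀, hu1, hv1, hu2, hv2, hsum⟩ := hbe
  obtain ⟨i, his, hit⟩ := adjCut_exists_block hadj₀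
  have hsucc := b.sizeUpTo_succ' i
  have hm2 : 2 ≤ b.blocksFun i := by omega
  refine ⟨i, hm2, ?_⟩
  -- first show that (u, v) is the outer pair of block i
  have houter : ((u : ℕ) = s₀ ∧ (v : ℕ) = t₀ - 1) ∨ ((u : ℕ) = t₀ - 1 ∧ (v : ℕ) = s₀) := by
    by_contra hcon
    push_neg at hcon
    -- the outer edge of block i is a b-edge distinct from (u,v), hence an a-edge
    have hL : (blockLeft b i : ℕ) = s₀ := by simp [blockLeft, his]
    have hR : (blockRight b i : ℕ) = t₀ - 1 := by simp [blockRight, his]; omega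
    have hbo : CompEdge b (blockLeft b i) (blockRight b i) := outer_edge b i hm2
    have hao : CompEdge a (blockLeft b i) (blockRight b i) := by
      rw [hiff]
      refine ⟨hbo, ?_, ?_⟩
      · rintro ⟨h1, h2⟩
        rw [Fin.ext_iff] at h1 h2
        rcases hcon with ⟨hc1, hc2⟩
        by_cases hc : (u : ℕ) = s₀
        · exact hc1 hc (by omega)
        · exact hc (by omega)
      · rintro ⟨h1, h2⟩
        rw [Fin.ext_iff] at h1 h2
        rcases hcon with ⟨hc1, hc2⟩
        by_cases hc : (u : ℕ) = t₀ - 1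
        · exact hc2 hc (by omega)
        · exact hc (by omega)
    -- hence (u,v) is an a-edge, contradiction
    have hauv : CompEdge a u v := by
      rw [edge_iff_cut] at hao
      obtain ⟨-, s₁, t₁, hadj₁, h1, h2, h3, h4, h5⟩ := hao
      rw [hL] at h1 h3
      rw [hR] at h2 h4
      rw [edge_iff_cut]
      exact ⟨hne, s₁, t₁, hadj₁, by omega, by omega, by omega, by omega, by omega⟩
    rw [hiff] at hauv
    exact hauv.2.1 ⟨rfl, rfl⟩
  apply composition_eq_of_edges
  intro x y
  rw [hiff, splitC_edge x y, his]
  have hmm : s₀ + b.blocksFun i - 1 = t₀ - 1 := by omega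
  rw [hmm]
  simp only [Fin.ext_iff]
  constructor
  · rintro ⟨he, h1, h2⟩
    refine ⟨he, ?_, ?_⟩ <;> rcases houter with ⟨ha1, ha2⟩ | ⟨ha1, ha2⟩ <;> rintro ⟨e1, e2⟩ <;>
      [exact h1 ⟨by omega, by omega⟩; exact h2 ⟨by omega, by omega⟩;
       exact h2 ⟨by omega, by omega⟩; exact h1 ⟨by omega, by omega⟩]
  · rintro ⟨he, h1, h2⟩
    refine ⟨he, ?_, ?_⟩ <;> rcases houter with ⟨ha1, ha2⟩ | ⟨ha1, ha2⟩ <;> rintro ⟨e1, e2⟩ <;>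
      [exact h1 ⟨by omega, by omega⟩; exact h2 ⟨by omega, by omega⟩;
       exact h2 ⟨by omega, by omega⟩; exact h1 ⟨by omega, by omega⟩]

lemma not_pattern_both {a b : Composition n} {u v u' v' : Fin n}
    (h1 : PatternAt (CompEdge b) (CompEdge a) u v)
    (h2 : PatternAt (CompEdge a) (CompEdge b) u' v') : False := by
  have hbe : CompEdge b u v := h1.1
  have hna : ¬ CompEdge a u v := by
    rw [h1.2]
    rintro ⟨-, hc, -⟩
    exact hc ⟨rfl, rfl⟩
  rw [h2.2] at hbe
  exact hna hbe.1

lemma splitC_inj {b : Composition n} {i i' : Fin b.length} {h : 2 ≤ b.blocksFun i}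
    {h' : 2 ≤ b.blocksFun i'} (he : splitC b i h = splitC b i' h') : i = i' := by
  by_contra hne
  have hsne : b.sizeUpTo i ≠ b.sizeUpTo i' := by
    have := b.sizeUpTo_succ' i
    have := b.sizeUpTo_succ' i'
    rcases Fin.lt_or_lt_of_ne hne with hlt | hlt
    · have h1 : b.sizeUpTo ((i : ℕ) + 1) ≤ b.sizeUpTo i' := sizeUpTo_le_sizeUpTo b hlt
      omega
    · have h1 : b.sizeUpTo ((i' : ℕ) + 1) ≤ b.sizeUpTo i := sizeUpTo_le_sizeUpTo b hlt
      omega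
  -- the outer edge of block i is an edge of splitC b i' but not of splitC b i
  have hedge : CompEdge (splitC b i' h') (blockLeft b i) (blockRight b i) := by
    rw [splitC_edge]
    have h1 := b.sizeUpTo_succ' i
    have h1' := b.sizeUpTo_succ' i'
    have hd : b.sizeUpTo i < b.sizeUpTo ((i:ℕ)+1) := b.sizeUpTo_strict_mono i.2
    have hd' : b.sizeUpTo i' < b.sizeUpTo ((i':ℕ)+1) := b.sizeUpTo_strict_mono i'.2
    -- blocks i and i' are disjoint intervals
    have hdisj : b.sizeUpTo i + b.blocksFun i ≤ b.sizeUpTo i' ∨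
        b.sizeUpTo i' + b.blocksFun i' ≤ b.sizeUpTo i := by
      rcases Fin.lt_or_lt_of_ne hne with hlt | hlt
      · left
        have := sizeUpTo_le_sizeUpTo b (show (i : ℕ) + 1 ≤ (i' : ℕ) from hlt)
        omega
      · right
        have := sizeUpTo_le_sizeUpTo b (show (i' : ℕ) + 1 ≤ (i : ℕ) from hlt)
        omega
    refine ⟨outer_edge b i h, ?_, ?_⟩ <;> simp only [blockLeft, blockRight] <;> omega
  rw [← he] at hedge
  rw [splitC_edge] at hedge
  exact hedge.2.1 ⟨rfl, by simp [blockRight]⟩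

end Pattern
section Graph

variable {n : ℕ} (a b : Composition n)

noncomputable instance meandFin : Fintype (Meander a b).ConnectedComponent :=
  Fintype.ofFinite _

/-- The set of vertices of a connected component. -/
noncomputable def mfiber (c : (Meander a b).ConnectedComponent) : Finset (Fin n) :=
  Finset.univ.filter (fun v => (Meander a b).connectedComponentMk v = c)

lemma mem_mfiber {a b : Composition n} {c : (Meander a b).ConnectedComponent} {v : Fin n} :
    v ∈ mfiber a b c ↔ (Meander a b).connectedComponentMk v = c := by
  simp [mfiber]

/-- Weight of a component: 2 for cycles, 1 for paths. -/
noncomputable def wgt (c : (Meander a b).ConnectedComponent) : ℕ :=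
  if IsCycleComp a b c then 2 else 1

lemma sum_mfiber_card : ∑ c : (Meander a b).ConnectedComponent, (mfiber a b c).card = n := by
  classical
  have := Finset.card_eq_sum_card_fiberwise
    (f := fun v : Fin n => (Meander a b).connectedComponentMk v)
    (s := Finset.univ) (t := Finset.univ) (fun x _ => Finset.mem_univ _)
  simpa [mfiber] using this.symm

lemma counts_eq : 2 * cycleCount a b + pathCount a b =
    ∑ c : (Meander a b).ConnectedComponent, wgt a b c := by
  classical
  unfold cycleCount pathCount wgt
  rw [Nat.card_eq_fintype_card, Nat.card_eq_fintype_card, Fintype.card_subtype,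
    Fintype.card_subtype, Finset.sum_ite, Finset.sum_const, Finset.sum_const]
  simp [mul_comm]

lemma mk_mem_mfiber (v : Fin n) :
    v ∈ mfiber a b ((Meander a b).connectedComponentMk v) := mem_mfiber.mpr rfl

lemma adj_same_comp {a b : Composition n} {v w : Fin n} (h : (Meander a b).Adj v w) :
    (Meander a b).connectedComponentMk v = (Meander a b).connectedComponentMk w :=
  SimpleGraph.ConnectedComponent.eq.mpr h.reachable

lemma wgt_le_card (c : (Meander a b).ConnectedComponent) : wgt a b c ≤ (mfiber a b c).card := by
  classical
  obtain ⟨v, hv⟩ := c.exists_rep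
  have hvmem : v ∈ mfiber a b c := mem_mfiber.mpr hv
  by_cases hcyc : IsCycleComp a b c
  · rw [wgt, if_pos hcyc]
    obtain ⟨⟨w, hw⟩, -⟩ := hcyc v hv
    have hwmem : w ∈ mfiber a b c := by
      rw [mem_mfiber, ← adj_same_comp (Or.inl hw : (Meander a b).Adj v w)]
      exact hv
    have hne : v ≠ w := hw.ne
    calc 2 = ({v, w} : Finset (Fin n)).card := by rw [Finset.card_pair hne]
    _ ≤ _ := Finset.card_le_card (by intro z hz; simp at hz; rcases hz with rfl | rfl <;>
        assumption)
  · rw [wgt, if_neg hcyc]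
    exact Finset.card_pos.mpr ⟨v, hvmem⟩

/-- Sum of the excesses of all components. -/
noncomputable def sumExc : ℕ :=
  ∑ c : (Meander a b).ConnectedComponent, ((mfiber a b c).card - wgt a b c)

lemma wgt_add_sumExc : (∑ c : (Meander a b).ConnectedComponent, wgt a b c) + sumExc a b = n := by
  classical
  rw [sumExc, ← Finset.sum_add_distrib]
  rw [show (∑ c : (Meander a b).ConnectedComponent,
        (wgt a b c + ((mfiber a b c).card - wgt a b c)))
      = ∑ c : (Meander a b).ConnectedComponent, (mfiber a b c).card from
    Finset.sum_congr rfl (fun c _ => by have := wgt_le_card a b c; omega)]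
  exact sum_mfiber_card a b

lemma one_le_wgt (c : (Meander a b).ConnectedComponent) : 1 ≤ wgt a b c := by
  rw [wgt]; split <;> omega

lemma seaweedInd_eq_iff (hn : 2 ≤ n) : seaweedInd a b = n - 2 ↔ sumExc a b = 1 := by
  classical
  have hsum := wgt_add_sumExc a b
  have hv : (0 : ℕ) < n := by omega
  have hpos : 1 ≤ ∑ c : (Meander a b).ConnectedComponent, wgt a b c := by
    have h1 := Finset.single_le_sum (f := wgt a b) (fun c _ => Nat.zero_le _)
      (Finset.mem_univ ((Meander a b).connectedComponentMk ⟨0, hv⟩))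
    have h2 := one_le_wgt a b ((Meander a b).connectedComponentMk ⟨0, hv⟩)
    omega
  rw [seaweedInd, counts_eq a b]
  omega

end Graph
section StructureThm

variable {n : ℕ} {a b : Composition n}

lemma sumExc_eq_one_of_pattern {A B : Fin n → Fin n → Prop} {u v : Fin n}
    (hadj : ∀ x y, (Meander a b).Adj x y ↔ A x y ∨ B x y)
    (hcyc : ∀ c, IsCycleComp a b c ↔
      ∀ w, (Meander a b).connectedComponentMk w = c → (∃ z, A w z) ∧ (∃ z, B w z))
    (hAsym : ∀ x y, A x y → A y x) (hAmatch : ∀ x y y', A x y → A x y' → y = y')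
    (hAne : ∀ x y, A x y → x ≠ y)
    (hpat : PatternAt A B u v) :
    sumExc a b = 1 := by
  classical
  obtain ⟨hAuv, hiff⟩ := hpat
  have hsub : ∀ x y, B x y → A x y := fun x y h => ((hiff x y).1 h).1
  have hGadj : ∀ x y, (Meander a b).Adj x y ↔ A x y := by
    intro x y; rw [hadj]; exact ⟨fun h => h.elim id (hsub x y), Or.inl⟩
  have hreach : ∀ x y : Fin n, (Meander a b).connectedComponentMk x =
      (Meander a b).connectedComponentMk y ↔ (x = y ∨ A x y) := by
    intro x y
    constructor
    · intro h
      obtain ⟨p⟩ := SimpleGraph.ConnectedComponent.eq.mp h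
      clear h
      induction p with
      | nil => exact Or.inl rfl
      | @cons x' m' y' h p ih =>
        have hA1 : A x' m' := (hGadj _ _).mp h
        rcases ih with rfl | hA2
        · exact Or.inr hA1
        · exact Or.inl (hAmatch m' x' y' (hAsym _ _ hA1) hA2)
    · rintro (rfl | hA)
      · rfl
      · exact adj_same_comp ((hGadj _ _).mpr hA)
  set c₀ := (Meander a b).connectedComponentMk u with hc₀
  have hmkv : (Meander a b).connectedComponentMk v = c₀ :=
    ((hreach u v).mpr (Or.inr hAuv)).symm
  have hfib0 : mfiber a b c₀ = {u, v} := by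
    ext z
    rw [mem_mfiber, hc₀, hreach]
    constructor
    · rintro (rfl | hA)
      · simp
      · have : z = v := hAmatch u z v (hAsym _ _ hA) hAuv
        simp [this]
    · intro hz
      simp only [Finset.mem_insert, Finset.mem_singleton] at hz
      rcases hz with rfl | rfl
      · exact Or.inl rfl
      · exact Or.inr (hAsym _ _ hAuv)
  have hnoB_u : ∀ z, ¬ B u z := by
    intro z hB
    have hA := hsub _ _ hB
    have hzv : z = v := hAmatch u z v hA hAuv
    exact ((hiff u z).1 hB).2.1 ⟨rfl, hzv⟩
  have hnotcyc : ¬ IsCycleComp a b c₀ := by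
    intro hc
    obtain ⟨-, ⟨z, hz⟩⟩ := (hcyc c₀).1 hc u rfl
    exact hnoB_u z hz
  have hexc0 : (mfiber a b c₀).card - wgt a b c₀ = 1 := by
    rw [hfib0, wgt, if_neg hnotcyc, Finset.card_pair (hAne u v hAuv)]
  have hother : ∀ c, c ≠ c₀ → (mfiber a b c).card - wgt a b c = 0 := by
    intro c hc
    obtain ⟨x, hx⟩ := c.exists_rep
    have hx' : (Meander a b).connectedComponentMk x = c := hx
    have hxu : x ≠ u := by rintro rfl; exact hc hx'.symm
    have hxv : x ≠ v := by
      rintro rfl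
      exact hc (hx'.symm.trans hmkv)
    by_cases hex : ∃ y, A x y
    · obtain ⟨y, hy⟩ := hex
      have hyne := hAne x y hy
      have hfib : mfiber a b c = {x, y} := by
        ext z
        rw [mem_mfiber, ← hx', hreach]
        constructor
        · rintro (rfl | hA)
          · simp
          · have : z = y := hAmatch x z y (hAsym _ _ hA) hy
            simp [this]
        · intro hz
          simp only [Finset.mem_insert, Finset.mem_singleton] at hz
          rcases hz with rfl | rfl
          · exact Or.inl rfl
          · exact Or.inr (hAsym _ _ hy)
      have hBxy : B x y := (hiff x y).2 ⟨hy,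
        by rintro ⟨rfl, rfl⟩; exact hxu rfl,
        by rintro ⟨rfl, rfl⟩; exact hxv rfl⟩
      have hcyccomp : IsCycleComp a b c := by
        rw [hcyc]
        intro w hw
        have hwmem : w ∈ mfiber a b c := mem_mfiber.mpr hw
        rw [hfib] at hwmem
        simp only [Finset.mem_insert, Finset.mem_singleton] at hwmem
        rcases hwmem with rfl | rfl
        · exact ⟨⟨y, hy⟩, ⟨y, hBxy⟩⟩
        · refine ⟨⟨x, hAsym _ _ hy⟩, ⟨x, ?_⟩⟩
          refine (hiff w x).2 ⟨hAsym _ _ hy, ?_, ?_⟩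
          · rintro ⟨rfl, rfl⟩; exact hxv rfl
          · rintro ⟨rfl, rfl⟩; exact hxu rfl
      rw [hfib, wgt, if_pos hcyccomp, Finset.card_pair hyne]
    · push_neg at hex
      have hfib : mfiber a b c = {x} := by
        ext z
        rw [mem_mfiber, ← hx', hreach]
        constructor
        · rintro (rfl | hA)
          · simp
          · exact absurd (hAsym _ _ hA) (hex z)
        · intro hz
          simp only [Finset.mem_singleton] at hz
          exact Or.inl hz
      have hnotcyc2 : ¬ IsCycleComp a b c := by
        intro hc2
        obtain ⟨⟨z, hz⟩, -⟩ := (hcyc c).1 hc2 x hx'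
        exact hex z hz
      rw [hfib, wgt, if_neg hnotcyc2, Finset.card_singleton]
  rw [sumExc, Finset.sum_eq_single c₀ (fun c _ hc => hother c hc)
    (fun h => absurd (Finset.mem_univ c₀) h)]
  exact hexc0

end StructureThm
section Converse

variable {n : ℕ} {a b : Composition n}

lemma patternAt_of_special {A B : Fin n → Fin n → Prop} {u v : Fin n}
    {c₀ : (Meander a b).ConnectedComponent}
    (hadj : ∀ x y, (Meander a b).Adj x y ↔ A x y ∨ B x y)
    (hcyc : ∀ c, IsCycleComp a b c ↔
      ∀ w, (Meander a b).connectedComponentMk w = c → (∃ z, A w z) ∧ (∃ z, B w z))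
    (hAne : ∀ x y, A x y → x ≠ y) (hBsym : ∀ x y, B x y → B y x)
    (hBne : ∀ x y, B x y → x ≠ y)
    (hother : ∀ c, c ≠ c₀ → (mfiber a b c).card - wgt a b c = 0)
    (hfib : mfiber a b c₀ = {u, v}) (hne : u ≠ v)
    (hGuv : (Meander a b).Adj u v)
    (hnoB : ∀ z, ¬ B u z) :
    PatternAt A B u v := by
  classical
  have hmku : (Meander a b).connectedComponentMk u = c₀ :=
    mem_mfiber.mp (by rw [hfib]; simp)
  have hmkv : (Meander a b).connectedComponentMk v = c₀ :=
    mem_mfiber.mp (by rw [hfib]; simp)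
  have hAuv : A u v := by
    rcases (hadj u v).1 hGuv with h | h
    · exact h
    · exact absurd h (hnoB v)
  -- a common analysis for components other than c₀
  have hcomp : ∀ x y : Fin n, (Meander a b).Adj x y →
      (Meander a b).connectedComponentMk x ≠ c₀ →
      IsCycleComp a b ((Meander a b).connectedComponentMk x) ∧
        mfiber a b ((Meander a b).connectedComponentMk x) = {x, y} := by
    intro x y hGxy hcne
    set c := (Meander a b).connectedComponentMk x with hcdef
    have hmy : (Meander a b).connectedComponentMk y = c := (adj_same_comp hGxy).symm
    have h0 := hother c hcne
    have hxm : x ∈ mfiber a b c := mem_mfiber.mpr rfl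
    have hym : y ∈ mfiber a b c := mem_mfiber.mpr hmy
    have hxyne : x ≠ y := (Meander a b).ne_of_adj hGxy
    have hsub2 : {x, y} ⊆ mfiber a b c := by
      intro z hz
      simp only [Finset.mem_insert, Finset.mem_singleton] at hz
      rcases hz with rfl | rfl <;> assumption
    have hcard2 : 2 ≤ (mfiber a b c).card := by
      rw [← Finset.card_pair hxyne]
      exact Finset.card_le_card hsub2
    have hwle := wgt_le_card a b c
    have hw2 : wgt a b c ≤ 2 := by rw [wgt]; split <;> omega
    have hcyc2 : IsCycleComp a b c := by
      by_contra hcc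
      rw [wgt, if_neg hcc] at h0 hwle
      omega
    refine ⟨hcyc2, ?_⟩
    refine (Finset.eq_of_subset_of_card_le hsub2 ?_).symm
    rw [Finset.card_pair hxyne]
    rw [wgt, if_pos hcyc2] at h0 hwle
    omega
  refine ⟨hAuv, fun x y => ⟨?_, ?_⟩⟩
  · intro hB
    have hGxy : (Meander a b).Adj x y := (hadj x y).2 (Or.inr hB)
    have hcne : (Meander a b).connectedComponentMk x ≠ c₀ := by
      intro hcc
      have hxmem : x ∈ mfiber a b c₀ := mem_mfiber.mpr hcc
      rw [hfib] at hxmem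
      simp only [Finset.mem_insert, Finset.mem_singleton] at hxmem
      have hymem : y ∈ mfiber a b c₀ :=
        mem_mfiber.mpr ((adj_same_comp hGxy).symm.trans hcc)
      rw [hfib] at hymem
      simp only [Finset.mem_insert, Finset.mem_singleton] at hymem
      rcases hxmem with rfl | rfl
      · exact hnoB y hB
      · rcases hymem with rfl | rfl
        · exact hnoB x (hBsym _ _ hB)
        · exact (hBne _ _ hB) rfl
    obtain ⟨hcyc2, hfibc⟩ := hcomp x y hGxy hcne
    obtain ⟨⟨z, hz⟩, -⟩ := (hcyc _).1 hcyc2 x rfl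
    have hzm : z ∈ mfiber a b ((Meander a b).connectedComponentMk x) :=
      mem_mfiber.mpr ((adj_same_comp ((hadj x z).2 (Or.inl hz))).symm)
    rw [hfibc] at hzm
    simp only [Finset.mem_insert, Finset.mem_singleton] at hzm
    rcases hzm with rfl | rfl
    · exact absurd rfl (hAne _ _ hz)
    · refine ⟨hz, ?_, ?_⟩
      · rintro ⟨rfl, rfl⟩; exact hnoB _ hB
      · rintro ⟨rfl, rfl⟩; exact hnoB _ (hBsym _ _ hB)
  · rintro ⟨hA, h1, h2⟩
    have hGxy : (Meander a b).Adj x y := (hadj x y).2 (Or.inl hA)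
    have hcne : (Meander a b).connectedComponentMk x ≠ c₀ := by
      intro hcc
      have hxmem : x ∈ mfiber a b c₀ := mem_mfiber.mpr hcc
      rw [hfib] at hxmem
      simp only [Finset.mem_insert, Finset.mem_singleton] at hxmem
      have hymem : y ∈ mfiber a b c₀ :=
        mem_mfiber.mpr ((adj_same_comp hGxy).symm.trans hcc)
      rw [hfib] at hymem
      simp only [Finset.mem_insert, Finset.mem_singleton] at hymem
      have hxyne : x ≠ y := (Meander a b).ne_of_adj hGxy
      rcases hxmem with rfl | rfl <;> rcases hymem with rfl | rfl
      · exact hxyne rfl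
      · exact h1 ⟨rfl, rfl⟩
      · exact h2 ⟨rfl, rfl⟩
      · exact hxyne rfl
    obtain ⟨hcyc2, hfibc⟩ := hcomp x y hGxy hcne
    obtain ⟨-, ⟨z, hz⟩⟩ := (hcyc _).1 hcyc2 x rfl
    have hzm : z ∈ mfiber a b ((Meander a b).connectedComponentMk x) :=
      mem_mfiber.mpr ((adj_same_comp ((hadj x z).2 (Or.inr hz))).symm)
    rw [hfibc] at hzm
    simp only [Finset.mem_insert, Finset.mem_singleton] at hzm
    rcases hzm with rfl | rfl
    · exact absurd rfl (hBne _ _ hz)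
    · exact hz

lemma no_cycle_card3 {c : (Meander a b).ConnectedComponent}
    (hcyc : IsCycleComp a b c) (h3 : (mfiber a b c).card = 3) : False := by
  classical
  obtain ⟨p, q, r, hpq, hpr, hqr, hset⟩ := Finset.card_eq_three.mp h3
  have hmem : ∀ z : Fin n, z ∈ mfiber a b c ↔ (z = p ∨ z = q ∨ z = r) := by
    intro z; rw [hset]; simp
  have hmk : ∀ z : Fin n, (z = p ∨ z = q ∨ z = r) →
      (Meander a b).connectedComponentMk z = c := fun z hz => mem_mfiber.mp ((hmem z).mpr hz)
  have hpartner : ∀ z : Fin n, (z = p ∨ z = q ∨ z = r) →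
      ∃ w, CompEdge a z w ∧ (w = p ∨ w = q ∨ w = r) := by
    intro z hz
    obtain ⟨⟨w, hw⟩, -⟩ := hcyc z (hmk z hz)
    refine ⟨w, hw, ?_⟩
    rw [← hmem]
    refine mem_mfiber.mpr ?_
    rw [← hmk z hz]
    exact (adj_same_comp (Or.inl (CompEdge.symm hw) : (Meander a b).Adj w z))
  obtain ⟨pp, hpp, hppmem⟩ := hpartner p (Or.inl rfl)
  obtain ⟨pq, hpq2, hpqmem⟩ := hpartner q (Or.inr (Or.inl rfl))
  obtain ⟨pr, hpr2, hprmem⟩ := hpartner r (Or.inr (Or.inr rfl))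
  have hppne := hpp.ne
  have hpqne := hpq2.ne
  have hprne := hpr2.ne
  rcases hppmem with rfl | rfl | rfl
  · exact hppne rfl
  · -- pp = q : edge p q
    rcases hprmem with rfl | rfl | rfl
    · -- edge r p : matching at p gives q = r
      exact hqr (compEdge_matching hpp (hpr2.symm))
    · -- edge r q : matching at q gives p = r
      exact hpr (compEdge_matching (hpp.symm) (hpr2.symm))
    · exact hprne rfl
  · -- pp = r : edge p r
    rcases hpqmem with rfl | rfl | rfl
    · -- edge q p : matching at p gives r = q
      exact hqr (compEdge_matching hpq2.symm hpp)
    · exact hpqne rfl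
    · -- edge q r : matching at r gives p = q
      exact hpq (compEdge_matching hpp.symm hpq2.symm)

lemma pattern_of_sumExc_eq_one (hs : sumExc a b = 1) :
    ∃ u v, PatternAt (CompEdge a) (CompEdge b) u v ∨
      PatternAt (CompEdge b) (CompEdge a) u v := by
  classical
  rw [sumExc] at hs
  set f : (Meander a b).ConnectedComponent → ℕ :=
    fun c => (mfiber a b c).card - wgt a b c with hf
  have hs' : (∑ c : (Meander a b).ConnectedComponent, f c) = 1 := hs
  have hex : ∃ c₀, f c₀ ≠ 0 := by
    by_contra hc
    push_neg at hc
    have h0 : (∑ c : (Meander a b).ConnectedComponent, f c) = 0 :=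
      Finset.sum_eq_zero (fun c _ => hc c)
    omega
  clear hs
  obtain ⟨c₀, hc0⟩ := hex
  have hle : f c₀ ≤ 1 := by
    rw [← hs']
    exact Finset.single_le_sum (fun c _ => Nat.zero_le _) (Finset.mem_univ c₀)
  have hc01 : f c₀ = 1 := by omega
  have herase : ∑ c ∈ Finset.univ.erase c₀, f c = 0 := by
    have := Finset.add_sum_erase Finset.univ f (Finset.mem_univ c₀)
    omega
  have hother : ∀ c, c ≠ c₀ → (mfiber a b c).card - wgt a b c = 0 := by
    intro c hc
    have := Finset.sum_eq_zero_iff.mp herase c (Finset.mem_erase.mpr ⟨hc, Finset.mem_univ c⟩)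
    exact this
  -- c₀ is a path component with exactly 2 vertices
  have hwle := wgt_le_card a b c₀
  have hpath : ¬ IsCycleComp a b c₀ ∧ (mfiber a b c₀).card = 2 := by
    by_cases hcyc : IsCycleComp a b c₀
    · exfalso
      rw [hf] at hc01
      simp only at hc01
      rw [wgt, if_pos hcyc] at hc01 hwle
      exact no_cycle_card3 hcyc (by omega)
    · refine ⟨hcyc, ?_⟩
      rw [hf] at hc01
      simp only at hc01
      rw [wgt, if_neg hcyc] at hc01 hwle
      omega
  obtain ⟨u, v, hne, hfib⟩ := Finset.card_eq_two.mp hpath.2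
  have hmku : (Meander a b).connectedComponentMk u = c₀ :=
    mem_mfiber.mp (by rw [hfib]; simp)
  have hmkv : (Meander a b).connectedComponentMk v = c₀ :=
    mem_mfiber.mp (by rw [hfib]; simp)
  have hGuv : (Meander a b).Adj u v := by
    obtain ⟨w⟩ := SimpleGraph.ConnectedComponent.eq.mp (hmku.trans hmkv.symm)
    cases w with
    | nil => exact absurd rfl hne
    | @cons _ z _ h p =>
      have hz : z ∈ mfiber a b c₀ :=
        mem_mfiber.mpr ((adj_same_comp h).symm.trans hmku)
      rw [hfib] at hz
      simp only [Finset.mem_insert, Finset.mem_singleton] at hz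
      rcases hz with rfl | rfl
      · exact absurd h ((Meander a b).loopless.irrefl z) -- impossible: Adj u u
      · exact h
  -- some vertex of c₀ misses an a-edge or a b-edge
  have hnc := hpath.1
  rw [IsCycleComp] at hnc
  push_neg at hnc
  obtain ⟨z, hz, hmiss⟩ := hnc
  have hzmem : z ∈ mfiber a b c₀ := mem_mfiber.mpr hz
  rw [hfib] at hzmem
  simp only [Finset.mem_insert, Finset.mem_singleton] at hzmem
  have hEa_sym : ∀ x y, CompEdge a x y → CompEdge a y x := fun _ _ h => h.symm
  have hEb_sym : ∀ x y, CompEdge b x y → CompEdge b y x := fun _ _ h => h.symm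
  have hEa_ne : ∀ x y : Fin n, CompEdge a x y → x ≠ y := fun _ _ h => h.ne
  have hEb_ne : ∀ x y : Fin n, CompEdge b x y → x ≠ y := fun _ _ h => h.ne
  have hadj1 : ∀ x y, (Meander a b).Adj x y ↔ CompEdge a x y ∨ CompEdge b x y :=
    fun x y => Iff.rfl
  have hadj2 : ∀ x y, (Meander a b).Adj x y ↔ CompEdge b x y ∨ CompEdge a x y :=
    fun x y => Iff.trans Iff.rfl or_comm
  have hcyc1 : ∀ c, IsCycleComp a b c ↔
      ∀ w, (Meander a b).connectedComponentMk w = c →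
        (∃ z, CompEdge a w z) ∧ (∃ z, CompEdge b w z) := fun c => Iff.rfl
  have hcyc2 : ∀ c, IsCycleComp a b c ↔
      ∀ w, (Meander a b).connectedComponentMk w = c →
        (∃ z, CompEdge b w z) ∧ (∃ z, CompEdge a w z) := by
    intro c
    constructor
    · intro h w hw
      exact ⟨(h w hw).2, (h w hw).1⟩
    · intro h w hw
      exact ⟨(h w hw).2, (h w hw).1⟩
  rcases hzmem with rfl | rfl
  · -- z = u
    by_cases hmA : ∃ w, CompEdge a z w
    · have hm : ∀ w, ¬ CompEdge b z w := hmiss hmA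
      exact ⟨z, v, Or.inl (patternAt_of_special hadj1 hcyc1 hEa_ne hEb_sym hEb_ne hother
        hfib hne hGuv hm)⟩
    · push_neg at hmA
      exact ⟨z, v, Or.inr (patternAt_of_special hadj2 hcyc2 hEb_ne hEa_sym hEa_ne hother
        hfib hne hGuv hmA)⟩
  · -- z = v : swap roles of u, v
    have hfib' : mfiber a b c₀ = {z, u} := by rw [hfib, Finset.pair_comm]
    by_cases hmA : ∃ w, CompEdge a z w
    · have hm : ∀ w, ¬ CompEdge b z w := hmiss hmA
      exact ⟨z, u, Or.inl (patternAt_of_special hadj1 hcyc1 hEa_ne hEb_sym hEb_ne hother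
        hfib' hne.symm hGuv.symm hm)⟩
    · push_neg at hmA
      exact ⟨z, u, Or.inr (patternAt_of_special hadj2 hcyc2 hEb_ne hEa_sym hEa_ne hother
        hfib' hne.symm hGuv.symm hmA)⟩

end Converse
section MainEquiv

variable {n : ℕ}

theorem ind_iff (hn : 2 ≤ n) (a b : Composition n) :
    seaweedInd a b = n - 2 ↔
      ∃ u v, PatternAt (CompEdge a) (CompEdge b) u v ∨
        PatternAt (CompEdge b) (CompEdge a) u v := by
  rw [seaweedInd_eq_iff a b hn]
  constructor
  · exact pattern_of_sumExc_eq_one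
  · rintro ⟨u, v, h | h⟩
    · exact sumExc_eq_one_of_pattern (fun x y => Iff.rfl) (fun c => Iff.rfl)
        (fun _ _ h => h.symm) (fun _ _ _ h h' => compEdge_matching h h')
        (fun _ _ h => h.ne) h
    · refine sumExc_eq_one_of_pattern (fun x y => Iff.trans Iff.rfl or_comm) ?_
        (fun _ _ h => h.symm) (fun _ _ _ h h' => compEdge_matching h h')
        (fun _ _ h => h.ne) h
      intro c
      constructor
      · intro hc w hw
        exact ⟨(hc w hw).2, (hc w hw).1⟩
      · intro hc w hw
        exact ⟨(hc w hw).2, (hc w hw).1⟩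

/-- The parametrization of pairs of compositions of index `n - 2`. -/
noncomputable def seaweedParam (hn : 2 ≤ n)
    (x : Bool × (Σ b : Composition n, {i : Fin b.length // 2 ≤ b.blocksFun i})) :
    {p : Composition n × Composition n // seaweedInd p.1 p.2 = n - 2} :=
  match x with
  | (false, ⟨b, i, hi⟩) => ⟨(b, splitC b i hi), by
      rw [ind_iff hn]
      exact ⟨_, _, Or.inl (pattern_splitC b i hi)⟩⟩
  | (true, ⟨b, i, hi⟩) => ⟨(splitC b i hi, b), by
      rw [ind_iff hn]
      exact ⟨_, _, Or.inr (pattern_splitC b i hi)⟩⟩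

lemma seaweedParam_bijective (hn : 2 ≤ n) : Function.Bijective (seaweedParam (n := n) hn) := by
  constructor
  · rintro ⟨(_|_), b, i, hi⟩ ⟨(_|_), b', i', hi'⟩ h
    · simp only [seaweedParam, Subtype.mk.injEq, Prod.mk.injEq] at h
      obtain ⟨rfl, h2⟩ := h
      obtain rfl := splitC_inj h2
      rfl
    · simp only [seaweedParam, Subtype.mk.injEq, Prod.mk.injEq] at h
      obtain ⟨h1, h2⟩ := h
      have p1 := pattern_splitC b' i' hi'
      have p2 := pattern_splitC b i hi
      rw [← h1] at p1
      rw [h2] at p2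
      exact (not_pattern_both p2 p1).elim
    · simp only [seaweedParam, Subtype.mk.injEq, Prod.mk.injEq] at h
      obtain ⟨h1, h2⟩ := h
      have p1 := pattern_splitC b i hi
      have p2 := pattern_splitC b' i' hi'
      rw [h1] at p1
      rw [← h2] at p2
      exact (not_pattern_both p1 p2).elim
    · simp only [seaweedParam, Subtype.mk.injEq, Prod.mk.injEq] at h
      obtain ⟨h2, rfl⟩ := h
      obtain rfl := splitC_inj h2
      rfl
  · rintro ⟨⟨p1, p2⟩, hp⟩
    rw [ind_iff hn] at hp
    obtain ⟨u, v, hpat | hpat⟩ := hp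
    · obtain ⟨i, h2, heq⟩ := pattern_is_splitC hpat
      exact ⟨(false, ⟨p1, i, h2⟩), Subtype.ext (Prod.ext rfl heq.symm)⟩
    · obtain ⟨i, h2, heq⟩ := pattern_is_splitC hpat
      exact ⟨(true, ⟨p2, i, h2⟩), Subtype.ext (Prod.ext heq.symm rfl)⟩

lemma cnk_eq_card (hn : 2 ≤ n) : Cnk n (n - 2) =
    2 * Nat.card (Σ b : Composition n, {i : Fin b.length // 2 ≤ b.blocksFun i}) := by
  rw [Cnk, ← Nat.card_eq_of_bijective _ (seaweedParam_bijective hn), Nat.card_prod]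
  simp

end MainEquiv
section Counting

variable {n : ℕ}

lemma sizeUpTo_inj {b : Composition n} {i i' : Fin b.length}
    (h : b.sizeUpTo i = b.sizeUpTo i') : i = i' := by
  by_contra hne
  rcases Fin.lt_or_lt_of_ne hne with hlt | hlt
  · have h1 := b.sizeUpTo_strict_mono i.2
    have h2 := sizeUpTo_le_sizeUpTo b (show (i : ℕ) + 1 ≤ (i' : ℕ) from hlt)
    omega
  · have h1 := b.sizeUpTo_strict_mono i'.2
    have h2 := sizeUpTo_le_sizeUpTo b (show (i' : ℕ) + 1 ≤ (i : ℕ) from hlt)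
    omega

lemma card_blocks_eq_card_cuts (b : Composition n) :
    (Finset.univ.filter fun i : Fin b.length => 2 ≤ b.blocksFun i).card =
    ((Finset.range n).filter fun q => Cut b q ∧ ¬ Cut b (q + 1)).card := by
  classical
  refine Finset.card_bij (fun i _ => b.sizeUpTo i) ?_ ?_ ?_
  · intro i hi
    rw [Finset.mem_filter] at hi ⊢
    have hadj := adjCut_block' b i
    have hle := sizeUpTo_add_blocksFun_le b i
    refine ⟨Finset.mem_range.mpr (show b.sizeUpTo (i : ℕ) < n by omega), ⟨i, rfl⟩, ?_⟩
    intro hc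
    exact hadj.2.2.2 (b.sizeUpTo i + 1) (by omega) (by omega) hc
  · intro i hi i' hi' h
    exact sizeUpTo_inj h
  · intro q hq
    rw [Finset.mem_filter, Finset.mem_range] at hq
    obtain ⟨hqn, ⟨j, hj⟩, hnc⟩ := hq
    have hjlen : j < b.length := by
      by_contra hc
      rw [b.sizeUpTo_ofLength_le j (by omega)] at hj
      omega
    have hsucc := b.sizeUpTo_succ' ⟨j, hjlen⟩
    have hbf : 2 ≤ b.blocksFun ⟨j, hjlen⟩ := by
      by_contra hc
      have h1 := b.one_le_blocksFun ⟨j, hjlen⟩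
      have : b.blocksFun ⟨j, hjlen⟩ = 1 := by omega
      rw [this] at hsucc
      exact hnc ⟨j + 1, by simp only at hsucc ⊢; omega⟩
    exact ⟨⟨j, hjlen⟩, Finset.mem_filter.mpr ⟨Finset.mem_univ _, hbf⟩, hj⟩

/-- The standard equivalence of compositions of `n` with subsets of `Fin (n-1)`. -/
noncomputable def compEquiv (n : ℕ) : Composition n ≃ Finset (Fin (n - 1)) :=
  (compositionEquiv n).trans (compositionAsSetEquiv n)

lemma mem_compEquiv_iff (c : Composition n) (j : Fin (n - 1)) :
    j ∈ compEquiv n c ↔ Cut c (1 + (j : ℕ)) := by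
  have hjn : 1 + (j : ℕ) < n := by
    have := j.2
    omega
  rw [compEquiv]
  simp only [Equiv.trans_apply, compositionAsSetEquiv]
  rw [Equiv.coe_fn_mk]
  rw [Set.mem_toFinset, Set.mem_setOf_eq]
  rw [CompositionAsSet.mem_boundaries_iff_exists_blocks_sum_take_eq]
  have hblocks : (compositionEquiv n c).blocks = c.blocks := c.toCompositionAsSet_blocks
  have hcard : (compositionEquiv n c).boundaries.card = c.blocks.length + 1 := by
    rw [(compositionEquiv n c).card_boundaries_eq_succ_length]
    rw [show (compositionEquiv n c).length = (compositionEquiv n c).blocks.length from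
      ((compositionEquiv n c).blocks_length).symm, hblocks]
  constructor
  · rintro ⟨i, hi, hsum⟩
    rw [hblocks] at hsum
    exact ⟨i, hsum⟩
  · rintro ⟨i, hsum⟩
    have hilen : i ≤ c.blocks.length := by
      by_contra hc
      rw [Composition.sizeUpTo, List.take_of_length_le (by omega)] at hsum
      rw [c.blocks_sum] at hsum
      omega
    refine ⟨i, by omega, ?_⟩
    rw [hblocks]
    exact hsum

lemma card_filter_subtype_not_mem {α : Type*} [Fintype α] [DecidableEq α] (x : α)
    [DecidablePred fun S : Finset α => x ∉ S] :
    (Finset.univ.filter fun S : Finset α => x ∉ S).card = 2 ^ (Fintype.card α - 1) := by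
  classical
  have : (Finset.univ.filter fun S : Finset α => x ∉ S) = (Finset.univ.erase x).powerset := by
    ext S
    simp [Finset.subset_erase]
  rw [this, Finset.card_powerset, Finset.card_erase_of_mem (Finset.mem_univ x),
    Finset.card_univ]

lemma card_filter_subtype_mem_not_mem {α : Type*} [Fintype α] [DecidableEq α] {x y : α}
    [DecidablePred fun S : Finset α => x ∈ S ∧ y ∉ S] (hxy : x ≠ y) :
    (Finset.univ.filter fun S : Finset α => x ∈ S ∧ y ∉ S).card =
      2 ^ (Fintype.card α - 2) := by
  classical
  have hcard : (((Finset.univ.erase x).erase y).powerset).card = 2 ^ (Fintype.card α - 2) := by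
    rw [Finset.card_powerset, Finset.card_erase_of_mem
      (Finset.mem_erase.mpr ⟨hxy.symm, Finset.mem_univ y⟩),
      Finset.card_erase_of_mem (Finset.mem_univ x), Finset.card_univ, Nat.sub_sub]
  rw [← hcard]
  refine Finset.card_bij' (fun S _ => S.erase x) (fun T _ => insert x T) ?_ ?_ ?_ ?_
  · intro S hS
    rw [Finset.mem_filter] at hS
    rw [Finset.mem_powerset]
    intro z hz
    rw [Finset.mem_erase] at hz
    rw [Finset.mem_erase, Finset.mem_erase]
    refine ⟨?_, hz.1, Finset.mem_univ z⟩
    rintro rfl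
    exact hS.2.2 hz.2
  · intro T hT
    rw [Finset.mem_powerset] at hT
    rw [Finset.mem_filter]
    refine ⟨Finset.mem_univ _, Finset.mem_insert_self x T, ?_⟩
    intro hy
    rcases Finset.mem_insert.mp hy with rfl | hy2
    · exact hxy rfl
    · have := hT hy2
      rw [Finset.mem_erase] at this
      exact this.1 rfl
  · intro S hS
    rw [Finset.mem_filter] at hS
    exact Finset.insert_erase hS.2.1
  · intro T hT
    rw [Finset.mem_powerset] at hT
    refine Finset.erase_insert ?_
    intro hx
    have := hT hx
    rw [Finset.mem_erase, Finset.mem_erase] at this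
    exact this.2.1 rfl

end Counting
section FinalCount

variable {n : ℕ}

lemma card_filter_comp_eq {P : Composition n → Prop} {Q : Finset (Fin (n - 1)) → Prop}
    [DecidablePred P] [DecidablePred Q] (h : ∀ b, P b ↔ Q (compEquiv n b)) :
    (Finset.univ.filter P).card = (Finset.univ.filter Q).card := by
  classical
  refine Finset.card_bij (fun b _ => compEquiv n b) ?_ ?_ ?_
  · intro b hb
    rw [Finset.mem_filter] at hb ⊢
    exact ⟨Finset.mem_univ _, (h b).1 hb.2⟩
  · intro b hb b' hb' he
    exact (compEquiv n).injective he
  · intro S hS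
    rw [Finset.mem_filter] at hS
    refine ⟨(compEquiv n).symm S, Finset.mem_filter.mpr ⟨Finset.mem_univ _, ?_⟩, by simp⟩
    rw [h]
    simpa using hS.2

lemma card_comp_q_zero (hn : 2 ≤ n) :
    (Finset.univ.filter fun b : Composition n => Cut b 0 ∧ ¬ Cut b (0 + 1)).card =
      2 ^ (n - 2) := by
  classical
  have h0 : (0 : ℕ) < n - 1 := by omega
  have hPQ : ∀ b : Composition n, (Cut b 0 ∧ ¬ Cut b (0 + 1)) ↔
      ((⟨0, h0⟩ : Fin (n - 1)) ∉ compEquiv n b) := by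
    intro b
    have hm := mem_compEquiv_iff b ⟨0, h0⟩
    rw [hm]
    simp [cut_zero]
  rw [card_filter_comp_eq (Q := fun S => (⟨0, h0⟩ : Fin (n - 1)) ∉ S) hPQ,
    card_filter_subtype_not_mem, Fintype.card_fin]
  rw [show n - 1 - 1 = n - 2 by omega]

lemma card_comp_q_mid (hn : 2 ≤ n) (q : ℕ) (hq1 : 1 ≤ q) (hq2 : q ≤ n - 2) :
    (Finset.univ.filter fun b : Composition n => Cut b q ∧ ¬ Cut b (q + 1)).card =
      2 ^ (n - 3) := by
  classical
  have hx : q - 1 < n - 1 := by omega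
  have hy : q < n - 1 := by omega
  have hxy : (⟨q - 1, hx⟩ : Fin (n - 1)) ≠ ⟨q, hy⟩ := by
    simp only [ne_eq, Fin.mk.injEq]
    omega
  have hPQ : ∀ b : Composition n, (Cut b q ∧ ¬ Cut b (q + 1)) ↔
      ((⟨q - 1, hx⟩ : Fin (n - 1)) ∈ compEquiv n b ∧
        (⟨q, hy⟩ : Fin (n - 1)) ∉ compEquiv n b) := by
    intro b
    rw [mem_compEquiv_iff b ⟨q - 1, hx⟩, mem_compEquiv_iff b ⟨q, hy⟩]
    simp only [Fin.val_mk]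
    rw [show 1 + (q - 1) = q by omega, show 1 + q = q + 1 by omega]
  rw [card_filter_comp_eq (Q := fun S => (⟨q - 1, hx⟩ : Fin (n - 1)) ∈ S ∧
      (⟨q, hy⟩ : Fin (n - 1)) ∉ S) hPQ,
    card_filter_subtype_mem_not_mem hxy, Fintype.card_fin]
  rw [show n - 1 - 2 = n - 3 by omega]

lemma card_comp_q_last (hn : 2 ≤ n) :
    (Finset.univ.filter fun b : Composition n =>
      Cut b (n - 1) ∧ ¬ Cut b ((n - 1) + 1)).card = 0 := by
  classical
  rw [Finset.card_eq_zero, Finset.filter_eq_empty_iff]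
  intro b _
  rw [show (n - 1) + 1 = n by omega]
  rintro ⟨-, hc⟩
  exact hc (cut_n b)

lemma total_count (hn : 2 ≤ n) :
    Nat.card (Σ b : Composition n, {i : Fin b.length // 2 ≤ b.blocksFun i}) =
      2 ^ (n - 2) + (n - 2) * 2 ^ (n - 3) := by
  classical
  rw [Nat.card_eq_fintype_card, Fintype.card_sigma]
  have h1 : ∀ b : Composition n, Fintype.card {i : Fin b.length // 2 ≤ b.blocksFun i}
      = ((Finset.range n).filter fun q => Cut b q ∧ ¬ Cut b (q + 1)).card := by
    intro b
    rw [Fintype.card_subtype]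
    exact card_blocks_eq_card_cuts b
  rw [Finset.sum_congr rfl (fun b _ => h1 b)]
  rw [Finset.sum_congr rfl (fun b _ => Finset.card_filter _ _)]
  rw [Finset.sum_comm]
  rw [Finset.sum_congr rfl (fun q _ => (Finset.card_filter
    (fun b : Composition n => Cut b q ∧ ¬ Cut b (q + 1)) _).symm)]
  obtain ⟨m, rfl⟩ : ∃ m, n = m + 2 := ⟨n - 2, by omega⟩
  rw [Finset.sum_range_succ']
  rw [Finset.sum_range_succ]
  rw [show m + 1 = (m + 2) - 1 by omega]
  rw [card_comp_q_last hn, card_comp_q_zero hn]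
  have hmid : ∀ i ∈ Finset.range m,
      (Finset.univ.filter fun b : Composition (m + 2) =>
        Cut b (i + 1) ∧ ¬ Cut b ((i + 1) + 1)).card = 2 ^ (m + 2 - 3) := by
    intro i hi
    rw [Finset.mem_range] at hi
    exact card_comp_q_mid hn (i + 1) (by omega) (by omega)
  rw [Finset.sum_congr rfl hmid, Finset.sum_const, Finset.card_range]
  simp only [smul_eq_mul]
  rw [show m + 2 - 2 = m by omega]
  ring

end FinalCount

theorem C_n_nsub2 (n : ℕ) (hn : 2 ≤ n) : Cnk n (n - 2) = n * 2 ^ (n - 2) := by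
  rw [cnk_eq_card hn, total_count hn]
  obtain ⟨m, rfl⟩ : ∃ m, n = m + 2 := ⟨n - 2, by omega⟩
  rcases m with - | k
  · norm_num
  · have e1 : k + 1 + 2 - 2 = k + 1 := by omega
    have e2 : k + 1 + 2 - 3 = k := by omega
    rw [e1, e2, pow_succ]
    ring
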